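/- For ζ = x + iy ∈ ℂ and q ∈ ℂ with |q| < 1, the identity ϑ₃(ζ,q)·ϑ₃(ζ̄,q) + ϑ₄(ζ,q)·ϑ₄(ζ̄,q) = 2 Σ_{(u,v)∈ℤ²} e^{4iux} e^{4iv·iy} q^{2u² + 2v²} holds, where ϑ₃(ζ,q) = Σ_k e^{2kiζ} q^{k²} and ϑ₄(ζ,q) = Σ_k (−1)^k e^{2kiζ} q^{k²}. -/

import Mathlib

open Complex

/-- `ϑ₃(ζ, q) = Σ_k e^{2kiζ} q^{k²}`. -/
noncomputable def theta3 (ζ q : ℂ) : ℂ :=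
  ∑' k : ℤ, Complex.exp (2 * (k : ℂ) * Complex.I * ζ) * q ^ (k ^ 2)

/-- `ϑ₄(ζ, q) = Σ_k (−1)^k e^{2kiζ} q^{k²}`. -/
noncomputable def theta4 (ζ q : ℂ) : ℂ :=
  ∑' k : ℤ, (-1 : ℂ) ^ k * Complex.exp (2 * (k : ℂ) * Complex.I * ζ) * q ^ (k ^ 2)

lemma sumNatAux (c : ℝ) {r : ℝ} (h0 : 0 ≤ r) (h1 : r < 1) :
    Summable fun n : ℕ => Real.exp (c * n) * r ^ n ^ 2 := by
  refine summable_of_ratio_norm_eventually_le (r := 1/2) (by norm_num) ?_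
  have ht : Filter.Tendsto (fun n : ℕ => Real.exp c * r ^ n) Filter.atTop (nhds 0) := by
    simpa using (tendsto_pow_atTop_nhds_zero_of_lt_one h0 h1).const_mul (Real.exp c)
  filter_upwards [ht.eventually_lt_const (by norm_num : (0:ℝ) < 1/2)] with n hn
  rw [Real.norm_of_nonneg (by positivity), Real.norm_of_nonneg (by positivity)]
  have key : Real.exp (c * (n+1)) * r ^ (n+1) ^ 2
      = (Real.exp c * r ^ (2*n+1)) * (Real.exp (c * n) * r ^ n ^ 2) := by
    have e1 : ((n:ℕ)+1) ^ 2 = n ^ 2 + (2*n+1) := by ring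
    have e2 : c * ((n:ℕ)+1) = c * n + c := by ring
    rw [e1, e2, pow_add, Real.exp_add]
    ring
  push_cast
  push_cast at key
  rw [key]
  have hb : Real.exp c * r ^ (2*n+1) ≤ 1/2 := by
    calc Real.exp c * r ^ (2*n+1) ≤ Real.exp c * r ^ n := by
          have := pow_le_pow_of_le_one h0 h1.le (by omega : n ≤ 2*n+1)
          exact mul_le_mul_of_nonneg_left this (Real.exp_nonneg c)
      _ ≤ 1/2 := hn.le
  exact mul_le_mul_of_nonneg_right hb (by positivity)

lemma sumIntAux (c : ℝ) {r : ℝ} (h0 : 0 ≤ r) (h1 : r < 1) :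
    Summable fun n : ℤ => Real.exp (c * n) * r ^ n.natAbs ^ 2 := by
  apply Summable.of_nat_of_neg
  · simpa using sumNatAux c h0 h1
  · have := sumNatAux (-c) h0 h1
    refine this.congr fun n => ?_
    simp [neg_mul, mul_neg]

lemma zpow_sq_eq (q : ℂ) (k : ℤ) : q ^ (k ^ 2) = q ^ (k.natAbs ^ 2) := by
  rw [← zpow_natCast]
  congr 1
  push_cast
  exact (_root_.sq_abs k).symm

lemma norm_theta_term (ζ q : ℂ) (k : ℤ) :
    ‖Complex.exp (2 * (k : ℂ) * Complex.I * ζ) * q ^ (k ^ 2)‖ =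
      Real.exp ((-2 * ζ.im) * k) * ‖q‖ ^ k.natAbs ^ 2 := by
  rw [zpow_sq_eq, norm_mul, Complex.norm_exp, norm_pow]
  congr 2
  simp [Complex.mul_re, Complex.mul_im]
  ring

lemma summable_norm_theta (ζ q : ℂ) (hq : ‖q‖ < 1) :
    Summable fun k : ℤ => ‖Complex.exp (2 * (k : ℂ) * Complex.I * ζ) * q ^ (k ^ 2)‖ := by
  simp_rw [norm_theta_term]
  exact sumIntAux _ (norm_nonneg q) hq

set_option maxHeartbeats 1000000 in
/-- For `ζ = x + iy` and `|q| < 1`, `ϑ₃(ζ)ϑ₃(ζ̄) + ϑ₄(ζ)ϑ₄(ζ̄)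
= 2 Σ_{(u,v)} e^{4iux} e^{4iv·iy} q^{2u² + 2v²}`. -/
theorem theta34_product_sum (x y : ℝ) (q : ℂ) (hq : ‖q‖ < 1) :
    theta3 ((x : ℂ) + (y : ℂ) * Complex.I) q * theta3 ((x : ℂ) - (y : ℂ) * Complex.I) q +
      theta4 ((x : ℂ) + (y : ℂ) * Complex.I) q * theta4 ((x : ℂ) - (y : ℂ) * Complex.I) q =
    2 * ∑' p : ℤ × ℤ,
      Complex.exp (4 * Complex.I * (p.1 : ℂ) * (x : ℂ)) *
        Complex.exp (4 * Complex.I * (p.2 : ℂ) * (Complex.I * (y : ℂ))) *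
        q ^ (2 * p.1 ^ 2 + 2 * p.2 ^ 2) := by
  set ζ : ℂ := (x : ℂ) + (y : ℂ) * Complex.I with hζ
  set ξ : ℂ := (x : ℂ) - (y : ℂ) * Complex.I with hξ
  set f : ℤ → ℂ := fun k => Complex.exp (2 * (k : ℂ) * Complex.I * ζ) * q ^ (k ^ 2) with hf
  set g : ℤ → ℂ := fun k => Complex.exp (2 * (k : ℂ) * Complex.I * ξ) * q ^ (k ^ 2) with hg
  set f4 : ℤ → ℂ := fun k => (-1 : ℂ) ^ k * f k with hf4d
  set g4 : ℤ → ℂ := fun k => (-1 : ℂ) ^ k * g k with hg4d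
  have hfn : Summable fun k => ‖f k‖ := summable_norm_theta ζ q hq
  have hgn : Summable fun k => ‖g k‖ := summable_norm_theta ξ q hq
  have hf4 : Summable fun k : ℤ => ‖f4 k‖ := by
    simpa [hf4d, norm_mul, norm_zpow] using hfn
  have hg4 : Summable fun k : ℤ => ‖g4 k‖ := by
    simpa [hg4d, norm_mul, norm_zpow] using hgn
  have ht3ζ : theta3 ζ q = ∑' k, f k := by simp only [theta3, hf]
  have ht3ξ : theta3 ξ q = ∑' k, g k := by simp only [theta3, hg]
  have ht4ζ : theta4 ζ q = ∑' k, f4 k := by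
    simp only [theta4, hf4d, hf, mul_assoc]
  have ht4ξ : theta4 ξ q = ∑' k, g4 k := by
    simp only [theta4, hg4d, hg, mul_assoc]
  have h3 : theta3 ζ q * theta3 ξ q = ∑' p : ℤ × ℤ, f p.1 * g p.2 := by
    rw [ht3ζ, ht3ξ]; exact tsum_mul_tsum_of_summable_norm hfn hgn
  have h4 : theta4 ζ q * theta4 ξ q = ∑' p : ℤ × ℤ, f4 p.1 * g4 p.2 := by
    rw [ht4ζ, ht4ξ]; exact tsum_mul_tsum_of_summable_norm hf4 hg4
  have hP3 : Summable fun p : ℤ × ℤ => f p.1 * g p.2 :=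
    summable_mul_of_summable_norm hfn hgn
  have hP4 : Summable fun p : ℤ × ℤ => f4 p.1 * g4 p.2 :=
    summable_mul_of_summable_norm hf4 hg4
  set F : ℤ × ℤ → ℂ :=
    fun p => f p.1 * g p.2 + f4 p.1 * g4 p.2 with hF
  have hsum : theta3 ζ q * theta3 ξ q + theta4 ζ q * theta4 ξ q = ∑' p, F p := by
    rw [h3, h4, hF, Summable.tsum_add hP3 hP4]
  rw [hsum]
  set i : ℤ × ℤ → ℤ × ℤ := fun w => (w.1 + w.2, w.1 - w.2) with hi
  have hinj : Function.Injective i := by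
    intro a b hab
    simp only [hi, Prod.mk.injEq] at hab
    obtain ⟨h1, h2⟩ := hab
    ext <;> omega
  have hsupp : Function.support F ⊆ Set.range i := by
    intro p hp
    rcases Int.even_or_odd (p.1 + p.2) with he | ho
    · obtain ⟨t, ht⟩ := he
      exact ⟨(t, p.1 - t), by rw [hi]; ext <;> simp <;> omega⟩
    · exfalso
      apply hp
      have hsgn : (-1 : ℂ) ^ p.1 * (-1 : ℂ) ^ p.2 = -1 := by
        rw [← zpow_add₀ (by norm_num : (-1 : ℂ) ≠ 0)]
        exact ho.neg_one_zpow
      have : F p = (1 + (-1 : ℂ) ^ p.1 * (-1 : ℂ) ^ p.2) * (f p.1 * g p.2) := by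
        rw [hF]; simp only [hf4d, hg4d]; ring
      rw [this, hsgn]
      ring
  rw [← hinj.tsum_eq hsupp, ← tsum_mul_left]
  apply tsum_congr
  rintro ⟨u, v⟩
  have hsgn : (-1 : ℂ) ^ (u + v) * (-1 : ℂ) ^ (u - v) = 1 := by
    rw [← zpow_add₀ (by norm_num : (-1 : ℂ) ≠ 0),
      (by ring : u + v + (u - v) = 2 * u), zpow_mul]
    norm_num
  have hqpow : q ^ ((u + v) ^ 2) * q ^ ((u - v) ^ 2) = q ^ (2 * u ^ 2 + 2 * v ^ 2) := by
    rw [← zpow_add' ?h]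
    · congr 1; ring
    · rcases eq_or_ne ((u + v) ^ 2 + (u - v) ^ 2) 0 with h | h
      · right; right
        constructor <;> nlinarith [sq_nonneg (u + v), sq_nonneg (u - v)]
      · right; left; exact h
  have hprod : f (u + v) * g (u - v) =
      Complex.exp (4 * Complex.I * (u : ℂ) * (x : ℂ)) *
        Complex.exp (4 * Complex.I * (v : ℂ) * (Complex.I * (y : ℂ))) *
        q ^ (2 * u ^ 2 + 2 * v ^ 2) := by
    rw [hf, hg]
    simp only
    rw [mul_mul_mul_comm, ← Complex.exp_add, ← Complex.exp_add, hqpow]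
    congr 2
    rw [hζ, hξ]
    push_cast
    ring
  have hF' : F (i (u, v)) = f (u + v) * g (u - v) * (1 + (-1 : ℂ) ^ (u + v) * (-1 : ℂ) ^ (u - v)) := by
    rw [hF, hi]; simp only [hf4d, hg4d]; ring
  rw [hF', hsgn, hprod]
  ring
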